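/- Let p be an odd prime, let k be a field of characteristic p, and let a ∈ k with a ≠ 0 and a ≠ 1. Then the rational function 1/(x(x − 1)(x − a))^{(p+1)/2} is exact if and only if ∑_{i=0}^{(p−1)/2} binom((p−1)/2, i)^2 · a^{(p−1)/2 − i} = 0 in k. -/

import Mathlib

open Polynomial

/-- `HasDerivRF f g` means `g` is the formal derivative of the rational function `f` in `k(x)`:
if `f = u / v` with `v ≠ 0`, then `g = (u' v - u v') / v ^ 2`. -/
def HasDerivRF {k : Type*} [Field k] (f g : RatFunc k) : Prop :=
  ∃ u v : Polynomial k, v ≠ 0 ∧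
    f = algebraMap (Polynomial k) (RatFunc k) u / algebraMap (Polynomial k) (RatFunc k) v ∧
    g = algebraMap (Polynomial k) (RatFunc k)
          (Polynomial.derivative u * v - u * Polynomial.derivative v) /
        algebraMap (Polynomial k) (RatFunc k) (v ^ 2)

/-- A rational function is exact if it is the formal derivative of some rational function. -/
def IsExactRF {k : Type*} [Field k] (g : RatFunc k) : Prop := ∃ f : RatFunc k, HasDerivRF f g

lemma coeff_pow_char {k : Type*} [Field k] {p : ℕ} [CharP k p] (hp : p.Prime)
    (v : Polynomial k) {n : ℕ} (hn : ¬ p ∣ n) : (v ^ p).coeff n = 0 := by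
  haveI := Fact.mk hp
  have h := congrArg (fun q : Polynomial k => q.coeff n) (Polynomial.map_frobenius_expand p v)
  simp only [Polynomial.coeff_map] at h
  rw [← h, Polynomial.coeff_expand hp.pos, if_neg hn, map_zero]

lemma arith1 {p b1 c d : ℕ} (hp : 1 ≤ p) (h : b1 + p * c = p * d + (p - 1))
    (hne : ¬ (b1 = p - 1 ∧ p * c = p * d)) : 2 * p - 1 ≤ b1 := by
  rcases lt_trichotomy c d with hcd | hcd | hcd
  · have h2 : p * (c + 1) ≤ p * d := Nat.mul_le_mul_left p hcd
    rw [Nat.mul_add, Nat.mul_one] at h2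
    omega
  · subst hcd; exact absurd ⟨by omega, rfl⟩ hne
  · have h2 : p * (d + 1) ≤ p * c := Nat.mul_le_mul_left p hcd
    rw [Nat.mul_add, Nat.mul_one] at h2
    omega

lemma arith2 {p b1 c d : ℕ} (hp : 1 ≤ p) (h : b1 + p * c = p * d + (p - 1)) :
    p ∣ b1 + 1 := by
  rcases le_or_gt c d with hcd | hcd
  · refine ⟨d + 1 - c, ?_⟩
    have h2 : p * (d + 1 - c) + p * c = p * (d + 1) := by
      rw [← Nat.mul_add]; congr 1; omega
    rw [Nat.mul_add, Nat.mul_one] at h2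
    omega
  · have h2 : p * (d + 1) ≤ p * c := Nat.mul_le_mul_left p hcd
    rw [Nat.mul_add, Nat.mul_one] at h2
    omega

lemma key_coeff_zero {k : Type*} [Field k] {p : ℕ} [CharP k p] (hp : p.Prime)
    (f v w u : Polynomial k) (hv : v ≠ 0) (hf : f.natDegree < 2 * p - 1)
    (h : f * v ^ p = derivative w * u ^ p) :
    f.coeff (p - 1) = 0 := by
  set d := v.natDegree with hd
  have hL : (f * v ^ p).coeff (p * d + (p - 1)) = f.coeff (p - 1) * v.leadingCoeff ^ p := by
    rw [Polynomial.coeff_mul]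
    rw [Finset.sum_eq_single ((p : ℕ) - 1, p * d)]
    · congr 1
      rw [← natDegree_pow, coeff_natDegree, leadingCoeff_pow]
    · rintro ⟨b1, b2⟩ hb hne
      have hb' : b1 + b2 = p * d + (p - 1) := Finset.HasAntidiagonal.mem_antidiagonal.mp hb
      by_cases h2 : p ∣ b2
      · obtain ⟨c, rfl⟩ := h2
        have hb1 : 2 * p - 1 ≤ b1 := by
          refine arith1 hp.one_le hb' ?_
          intro ⟨e1, e2⟩
          exact hne (by rw [e1, e2])
        rw [Polynomial.coeff_eq_zero_of_natDegree_lt (lt_of_lt_of_le hf hb1), zero_mul]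
      · rw [coeff_pow_char hp v h2, mul_zero]
    · intro hmem
      exact absurd (Finset.HasAntidiagonal.mem_antidiagonal.mpr (by omega)) hmem
  have hR : (derivative w * u ^ p).coeff (p * d + (p - 1)) = 0 := by
    rw [Polynomial.coeff_mul]
    apply Finset.sum_eq_zero
    rintro ⟨b1, b2⟩ hb
    have hb' : b1 + b2 = p * d + (p - 1) := Finset.HasAntidiagonal.mem_antidiagonal.mp hb
    by_cases h2 : p ∣ b2
    · obtain ⟨c, rfl⟩ := h2
      have h1 : p ∣ b1 + 1 := arith2 hp.one_le hb'
      rw [Polynomial.coeff_derivative]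
      have hz : ((b1 + 1 : ℕ) : k) = 0 := (CharP.cast_eq_zero_iff k p _).mpr h1
      push_cast at hz
      rw [hz, mul_zero, zero_mul]
    · rw [coeff_pow_char hp u h2, mul_zero]
  have hfin := hL.symm.trans
    ((congrArg (fun q : Polynomial k => q.coeff (p * d + (p - 1))) h).trans hR)
  rcases mul_eq_zero.mp hfin with h0 | h0
  · exact h0
  · exact absurd (pow_eq_zero_iff hp.ne_zero |>.mp h0) (leadingCoeff_ne_zero.mpr hv)

lemma deriv_trick {k : Type*} [Field k] {p : ℕ} [CharP k p] (hp3 : 3 ≤ p)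
    (u v : Polynomial k) :
    derivative (u * v ^ (p - 1)) * v ^ 2 = (derivative u * v - u * derivative v) * v ^ p := by
  obtain ⟨n, rfl⟩ : ∃ n, p = n + 3 := ⟨p - 3, by omega⟩
  have hc : ((n + 3 - 1 : ℕ) : k) = -1 := by
    have h0 := CharP.cast_eq_zero k (n + 3)
    have h1 : (n + 3 - 1 : ℕ) = n + 2 := by omega
    rw [h1]; push_cast at h0 ⊢; linear_combination h0
  rw [derivative_mul, derivative_pow, hc, map_neg, map_one]
  have h2 : n + 3 - 1 = n + 2 := by omega
  have h3 : n + 2 - 1 = n + 1 := by omega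
  rw [h2, h3]
  ring

lemma deriv_pow_char {k : Type*} [Field k] {p : ℕ} [CharP k p] (v : Polynomial k) :
    derivative (v ^ p) = 0 := by
  rw [derivative_pow, CharP.cast_eq_zero k p, map_zero, zero_mul, zero_mul]

lemma exists_antideriv {k : Type*} [Field k] {p : ℕ} [CharP k p]
    (f : Polynomial k) (hdeg : f.natDegree + 1 < 2 * p) (hb : f.coeff (p - 1) = 0) :
    ∃ w : Polynomial k, derivative w = f := by
  refine ⟨∑ j ∈ Finset.range (f.natDegree + 1),
    C (f.coeff j * ((j + 1 : ℕ) : k)⁻¹) * X ^ (j + 1), ?_⟩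
  rw [map_sum]
  have key : ∀ j ∈ Finset.range (f.natDegree + 1),
      derivative (C (f.coeff j * ((j + 1 : ℕ) : k)⁻¹) * X ^ (j + 1)) = C (f.coeff j) * X ^ j := by
    intro j hj
    rw [derivative_C_mul_X_pow, Nat.add_sub_cancel]
    by_cases hz : ((j + 1 : ℕ) : k) = 0
    · have hdvd : p ∣ j + 1 := (CharP.cast_eq_zero_iff k p _).mp hz
      have hlt : j + 1 < 2 * p := by
        have := Finset.mem_range.mp hj; omega
      have hjp : j + 1 = p := Nat.eq_of_dvd_of_lt_two_mul (by omega) hdvd hlt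
      have hj' : j = p - 1 := by omega
      rw [hj', hb]
      simp
    · push_cast at hz ⊢
      rw [mul_assoc, inv_mul_cancel₀ hz, mul_one]
  rw [Finset.sum_congr rfl key]
  exact f.as_sum_range_C_mul_X_pow.symm

lemma hasse_coeff {k : Type*} [Field k] (a : k) (m : ℕ) :
    ((X * (X - 1) * (X - C a)) ^ m).coeff (2 * m)
      = (-1) ^ m * ∑ i ∈ Finset.range (m + 1), ((m.choose i : k)) ^ 2 * a ^ i := by
  have e1 : (X - 1 : Polynomial k) = X + C (-1) := by
    rw [map_neg, C_1, sub_eq_add_neg]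
  have e2 : (X - C a : Polynomial k) = X + C (-a) := by
    rw [map_neg, sub_eq_add_neg]
  have expand : (X * (X - 1) * (X - C a) : Polynomial k) ^ m
      = X ^ m * ((X + C (-1)) ^ m * (X + C (-a)) ^ m) := by
    rw [e1, e2, mul_pow, mul_pow, mul_assoc]
  rw [expand, two_mul, coeff_X_pow_mul]
  rw [Polynomial.coeff_mul, Finset.Nat.sum_antidiagonal_eq_sum_range_succ_mk]
  rw [Finset.mul_sum]
  apply Finset.sum_congr rfl
  intro i hi
  have him : i ≤ m := by have := Finset.mem_range.mp hi; omega
  rw [coeff_X_add_C_pow, coeff_X_add_C_pow, Nat.sub_sub_self him, Nat.choose_symm him]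
  have hsign : ((-1 : k)) ^ (m - i) * (-1) ^ i = (-1) ^ m := by
    rw [← pow_add, Nat.sub_add_cancel him]
  calc (-1 : k) ^ (m - i) * ↑(m.choose i) * ((-a) ^ i * ↑(m.choose i))
      = ((-1 : k) ^ (m - i) * (-1) ^ i) * ((m.choose i : k) ^ 2 * a ^ i) := by
        rw [neg_pow a i]; ring
    _ = (-1) ^ m * ((m.choose i : k) ^ 2 * a ^ i) := by rw [hsign]

lemma sum_reflect_eq {k : Type*} [Field k] (a : k) (m : ℕ) :
    ∑ i ∈ Finset.range (m + 1), ((m.choose i : k)) ^ 2 * a ^ (m - i)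
      = ∑ i ∈ Finset.range (m + 1), ((m.choose i : k)) ^ 2 * a ^ i := by
  rw [← Finset.sum_range_reflect (fun i => ((m.choose i : k)) ^ 2 * a ^ (m - i)) (m + 1)]
  apply Finset.sum_congr rfl
  intro i hi
  have him : i ≤ m := by have := Finset.mem_range.mp hi; omega
  have h1 : m + 1 - 1 - i = m - i := by omega
  simp only [h1, Nat.choose_symm him, Nat.sub_sub_self him]

/-- For an odd prime `p` and `a ∈ k`, `a ≠ 0, 1`: the rational function
`1/(x(x-1)(x-a))^{(p+1)/2}` is exact iff `∑ᵢ C((p-1)/2, i)² a^{(p-1)/2 - i} = 0` in `k`. -/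
theorem stmt13 {k : Type*} [Field k] (p : ℕ) (hp : p.Prime) (hodd : Odd p) [CharP k p]
    (a : k) (ha0 : a ≠ 0) (ha1 : a ≠ 1) :
    IsExactRF (((RatFunc.X * (RatFunc.X - 1) * (RatFunc.X - RatFunc.C a)) ^ ((p + 1) / 2))⁻¹) ↔
      ∑ i ∈ Finset.range ((p - 1) / 2 + 1),
        ((Nat.choose ((p - 1) / 2) i : k)) ^ 2 * a ^ ((p - 1) / 2 - i) = 0 := by
  classical
  obtain ⟨t, ht⟩ := hodd
  have hp2 := hp.two_le
  have hpne2 : p ≠ 2 := by omega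
  have hp3 : 3 ≤ p := by
    rcases Nat.lt_or_ge p 3 with h | h
    · interval_cases p <;> omega
    · exact h
  set m := (p - 1) / 2 with hm
  have hm' : p = 2 * m + 1 := by omega
  have hq : (p + 1) / 2 = m + 1 := by omega
  set D : Polynomial k := X * (X - 1) * (X - C a) with hD
  have hDm : D.Monic := by
    have h1 : (X - 1 : Polynomial k) = X - C 1 := by rw [C_1]
    rw [hD, h1]
    exact (monic_X.mul (monic_X_sub_C 1)).mul (monic_X_sub_C a)
  have hD0 : D ≠ 0 := hDm.ne_zero
  have hDdeg : D.natDegree = 3 := by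
    have h1 : (X - 1 : Polynomial k) = X - C 1 := by rw [C_1]
    rw [hD, h1, (monic_X.mul (monic_X_sub_C 1)).natDegree_mul (monic_X_sub_C a),
      monic_X.natDegree_mul (monic_X_sub_C 1), natDegree_X, natDegree_X_sub_C, natDegree_X_sub_C]
  have hDmdeg : (D ^ m).natDegree = 3 * m := by
    rw [hDm.natDegree_pow, hDdeg, Nat.mul_comm]
  set A := algebraMap (Polynomial k) (RatFunc k) with hA
  have hAD : A D ≠ 0 := RatFunc.algebraMap_ne_zero hD0
  -- rewrite the rational function as A(D^m) / A(D^p)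
  have hgid : ((RatFunc.X * (RatFunc.X - 1) * (RatFunc.X - RatFunc.C a)) ^ ((p + 1) / 2))⁻¹
      = A (D ^ m) / A (D ^ p) := by
    have hX : (RatFunc.X : RatFunc k) = A X := (RatFunc.algebraMap_X).symm
    have hC : (RatFunc.C a : RatFunc k) = A (C a) := (RatFunc.algebraMap_C a).symm
    have h1 : (1 : RatFunc k) = A 1 := (map_one A).symm
    rw [hq, hX, hC, h1, ← map_sub, ← map_sub, ← map_mul, ← map_mul, ← hD,
      map_pow, map_pow]
    rw [eq_div_iff (pow_ne_zero p hAD), inv_mul_eq_iff_eq_mul₀ (pow_ne_zero (m + 1) hAD),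
      ← pow_add]
    congr 1
    omega
  rw [hgid]
  -- coefficient of x^(p-1) in D^m
  have hcoeff : (D ^ m).coeff (p - 1)
      = (-1) ^ m * ∑ i ∈ Finset.range (m + 1), ((m.choose i : k)) ^ 2 * a ^ i := by
    have hpm1 : p - 1 = 2 * m := by omega
    rw [hpm1, hD]
    exact hasse_coeff a m
  have hsum := sum_reflect_eq a m
  have hsgn : ((-1 : k)) ^ m ≠ 0 := pow_ne_zero m (neg_ne_zero.mpr one_ne_zero)
  have hiff : (D ^ m).coeff (p - 1) = 0 ↔
      ∑ i ∈ Finset.range (m + 1), ((m.choose i : k)) ^ 2 * a ^ (m - i) = 0 := by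
    rw [hcoeff, hsum, mul_eq_zero]
    constructor
    · rintro (h | h)
      · exact absurd h hsgn
      · exact h
    · intro h; exact Or.inr h
  rw [← hiff]
  constructor
  · rintro ⟨f, u, v, hv, hfuv, hg⟩
    have hquot : A (derivative u * v - u * derivative v) / A (v ^ 2)
        = A (derivative (u * v ^ (p - 1))) / A (v ^ p) := by
      rw [div_eq_div_iff (RatFunc.algebraMap_ne_zero (pow_ne_zero 2 hv))
        (RatFunc.algebraMap_ne_zero (pow_ne_zero p hv)), ← map_mul, ← map_mul]
      exact congrArg A (deriv_trick hp3 u v).symm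
    have heq : A (D ^ m) / A (D ^ p) = A (derivative (u * v ^ (p - 1))) / A (v ^ p) :=
      hg.trans hquot
    have hpoly : D ^ m * v ^ p = derivative (u * v ^ (p - 1)) * D ^ p := by
      have h2 := (div_eq_div_iff (RatFunc.algebraMap_ne_zero (pow_ne_zero p hD0))
        (RatFunc.algebraMap_ne_zero (pow_ne_zero p hv))).mp heq
      rw [← map_mul, ← map_mul] at h2
      exact RatFunc.algebraMap_injective k h2
    have hf3 : (D ^ m).natDegree < 2 * p - 1 := by rw [hDmdeg]; omega
    exact key_coeff_zero hp (D ^ m) v (u * v ^ (p - 1)) D hv hf3 hpoly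
  · intro hb
    obtain ⟨w, hw⟩ := exists_antideriv (D ^ m) (by rw [hDmdeg]; omega) hb
    refine ⟨A w / A (D ^ p), w, D ^ p, pow_ne_zero p hD0, rfl, ?_⟩
    rw [hw, deriv_pow_char, mul_zero, sub_zero]
    rw [div_eq_div_iff (RatFunc.algebraMap_ne_zero (pow_ne_zero p hD0))
      (RatFunc.algebraMap_ne_zero (pow_ne_zero 2 (pow_ne_zero p hD0)))]
    rw [← map_mul, ← map_mul]
    exact congrArg A (by ring)
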